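/- Let M be an operator valued mean on Ω with M(∞) = O, and let M₀ be the unique positive operator measure with M(f) = ∫ f dM₀ (weakly) for f ∈ C_c(Ω). Then M(f) = ∫ f dM₀ for all f ∈ BC(Ω), given that for every unit vector ψ the scalar mean m_ψ(f) = ⟨ψ, M(f)ψ⟩ satisfies m_ψ(∞) = ⟨ψ, M(∞)ψ⟩. -/

import Mathlib

open MeasureTheory BoundedContinuousFunction

/-- `f` is a continuous compactly supported function with `0 ≤ f ≤ 1`. -/
def CcPosLeOne {α : Type*} [TopologicalSpace α] (f : α →ᵇ ℂ) : Prop :=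
  HasCompactSupport ⇑f ∧ ∀ x, (f x).im = 0 ∧ 0 ≤ (f x).re ∧ (f x).re ≤ 1

/-- Let `M` be an operator valued mean on `Ω` with `M(∞) = O`, and let `M₀` be the
positive operator measure representing `M` on `C_c(Ω)`; it is encoded by the family
of (finite, regular) scalar measures `ν ψ = ⟨ψ, M₀(·)ψ⟩`.  The condition `M(∞) = O`
is encoded, via the scalar means `m_ψ(f) = ⟨ψ, M(f)ψ⟩` with
`m_ψ(∞) = ⟨ψ, M(∞)ψ⟩`, as `sup{m_ψ(f) : f ∈ C_c⁺, f ≤ 1} = 1` for all unit `ψ`.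
Then `M(f) = ∫ f dM₀` (weakly) for all `f ∈ BC(Ω)`. -/
theorem stmt18 {Ω : Type*} [MetricSpace Ω] [LocallyCompactSpace Ω]
    [TopologicalSpace.SeparableSpace Ω] [MeasurableSpace Ω] [BorelSpace Ω]
    {H : Type*} [NormedAddCommGroup H] [InnerProductSpace ℂ H] [CompleteSpace H]
    (M : (Ω →ᵇ ℂ) →ₗ[ℂ] (H →L[ℂ] H))
    (hpos : ∀ f : Ω →ᵇ ℂ, (∀ x, (f x).im = 0 ∧ 0 ≤ (f x).re) → (M f).IsPositive)
    (hone : M (const Ω (1 : ℂ)) = 1)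
    (ν : H → Measure Ω) [∀ ψ, IsFiniteMeasure (ν ψ)] [∀ ψ, (ν ψ).Regular]
    (hrep : ∀ (ψ : H) (f : Ω →ᵇ ℂ), HasCompactSupport ⇑f →
      (inner ℂ ψ (M f ψ) : ℂ) = ∫ x, f x ∂(ν ψ))
    (hMinf : ∀ ψ : H, ‖ψ‖ = 1 →
      sSup {r : ℝ | ∃ f : Ω →ᵇ ℂ, CcPosLeOne f ∧ r = (inner ℂ ψ (M f ψ) : ℂ).re} = 1) :
    ∀ (f : Ω →ᵇ ℂ) (ψ : H), (inner ℂ ψ (M f ψ) : ℂ) = ∫ x, f x ∂(ν ψ) := by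
  intro f ψ
  classical
  set T : (Ω →ᵇ ℂ) → ℂ := fun h => (inner ℂ ψ (M h ψ) : ℂ) with hTdef
  have hTadd : ∀ g h : Ω →ᵇ ℂ, T (g + h) = T g + T h := by
    intro g h
    simp only [hTdef, map_add, ContinuousLinearMap.add_apply, inner_add_right]
  have hTsmul : ∀ (c : ℂ) (h : Ω →ᵇ ℂ), T (c • h) = c * T h := by
    intro c h
    simp only [hTdef, M.map_smul, ContinuousLinearMap.smul_apply, inner_smul_right]
  have hTpos : ∀ h : Ω →ᵇ ℂ, (∀ x, (h x).im = 0 ∧ 0 ≤ (h x).re) →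
      (T h).im = 0 ∧ 0 ≤ (T h).re := by
    intro h hh
    have hp := hpos h hh
    refine ⟨?_, (Complex.nonneg_iff.mp (hp.inner_nonneg_right ψ)).1⟩
    have hsym := hp.isSelfAdjoint.isSymmetric ψ ψ
    have hc : (starRingEnd ℂ) (T h) = T h := by
      rw [hTdef]
      dsimp only
      rw [inner_conj_symm]
      exact hsym
    exact Complex.conj_eq_iff_im.mp hc
  have hTmono : ∀ g h : Ω →ᵇ ℂ, (∀ x, (g x).im = 0 ∧ (h x).im = 0 ∧ (g x).re ≤ (h x).re) →
      (T g).re ≤ (T h).re := by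
    intro g h hx
    have h0 : (T (h - g)).im = 0 ∧ 0 ≤ (T (h - g)).re := by
      refine hTpos _ fun x => ?_
      obtain ⟨a, b, c⟩ := hx x
      have e : (h - g) x = h x - g x := rfl
      constructor
      · rw [e, Complex.sub_im, a, b]; ring
      · rw [e, Complex.sub_re]; linarith
    have e : T h = T (h - g) + T g := by rw [← hTadd, sub_add_cancel]
    have := h0.2
    rw [e, Complex.add_re]
    linarith
  have hTone : T (const Ω (1 : ℂ)) = ((‖ψ‖ : ℂ))^2 := by
    rw [hTdef]
    dsimp only
    rw [hone, ContinuousLinearMap.one_apply, inner_self_eq_norm_sq_to_K]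
    norm_num
  have hTone_re : (T (const Ω (1 : ℂ))).re = ‖ψ‖^2 := by
    rw [hTone, ← Complex.ofReal_pow, Complex.ofReal_re]
  have hzero : CcPosLeOne (0 : Ω →ᵇ ℂ) := by
    constructor
    · show IsCompact (tsupport ⇑(0 : Ω →ᵇ ℂ))
      have he : tsupport ⇑(0 : Ω →ᵇ ℂ) = ∅ := by simp [tsupport]
      rw [he]; exact isCompact_empty
    · intro x; simp
  -- approximation of the identity from the sSup hypothesis
  have happrox : ∀ ε : ℝ, 0 < ε → ∃ g : Ω →ᵇ ℂ, CcPosLeOne g ∧ ‖ψ‖^2 - ε < (T g).re := by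
    intro ε hε
    by_cases hψ : ψ = 0
    · refine ⟨0, hzero, ?_⟩
      rw [hψ]
      simp only [hTdef]
      simp [hε]
    · set c : ℝ := ‖ψ‖ with hcdef
      have hc : 0 < c := norm_pos_iff.mpr hψ
      set ψ' : H := ((c : ℂ))⁻¹ • ψ with hψ'def
      have hψ' : ‖ψ'‖ = 1 := by
        rw [hψ'def, norm_smul]
        simp [hcdef]
        field_simp
      have hsup := hMinf ψ' hψ'
      have hne : {r : ℝ | ∃ g : Ω →ᵇ ℂ, CcPosLeOne g ∧
          r = (inner ℂ ψ' (M g ψ') : ℂ).re}.Nonempty := ⟨_, 0, hzero, rfl⟩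
      have hεc : 0 < ε / c^2 := div_pos hε (pow_pos hc 2)
      have hlt1 : 1 - ε / c^2 < sSup {r : ℝ | ∃ g : Ω →ᵇ ℂ, CcPosLeOne g ∧
          r = (inner ℂ ψ' (M g ψ') : ℂ).re} := by rw [hsup]; linarith
      obtain ⟨r, hrS, hrlt⟩ := exists_lt_of_lt_csSup hne hlt1
      obtain ⟨g, hg, hr⟩ := hrS
      refine ⟨g, hg, ?_⟩
      have hscale : (inner ℂ ψ' (M g ψ') : ℂ) = (((c^2)⁻¹ : ℝ) : ℂ) * T g := by
        rw [hψ'def, hTdef]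
        dsimp only
        rw [(M g).map_smul, inner_smul_left, inner_smul_right]
        rw [← Complex.ofReal_inv, Complex.conj_ofReal]
        push_cast
        ring
      have hre : r = (c^2)⁻¹ * (T g).re := by
        rw [hr, hscale, Complex.re_ofReal_mul]
      rw [hre] at hrlt
      have hc2 : 0 < c^2 := pow_pos hc 2
      calc ‖ψ‖^2 - ε = c^2 * (1 - ε / c^2) := by field_simp; rfl
        _ < c^2 * ((c^2)⁻¹ * (T g).re) := by exact (mul_lt_mul_iff_right₀ hc2).mpr hrlt
        _ = (T g).re := by field_simp
  -- bound on ν of compacts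
  have hKbound : ∀ K : Set Ω, IsCompact K → ((ν ψ) K).toReal ≤ ‖ψ‖^2 := by
    intro K hK
    obtain ⟨χ, hχ1, hχ0, hχc, hχ01⟩ :=
      exists_continuous_one_zero_of_isCompact hK isClosed_empty (Set.disjoint_empty K)
    set g : Ω →ᵇ ℂ := BoundedContinuousFunction.ofNormedAddCommGroup (fun x => ((χ x : ℝ) : ℂ))
      (Complex.continuous_ofReal.comp χ.continuous) 1
      (fun x => by
        rw [Complex.norm_real, Real.norm_eq_abs]
        exact abs_le.mpr ⟨by linarith [(hχ01 x).1], (hχ01 x).2⟩) with hgdef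
    have hgx : ∀ x, g x = ((χ x : ℝ) : ℂ) := fun x => rfl
    have hgc : HasCompactSupport ⇑g := by
      have : ⇑g = (fun r : ℝ => (r : ℂ)) ∘ ⇑χ := rfl
      rw [this]
      exact hχc.comp_left Complex.ofReal_zero
    have hint : T g = ∫ x, g x ∂(ν ψ) := hrep ψ g hgc
    have h1 : ((ν ψ) K).toReal ≤ ∫ x, (g x).re ∂(ν ψ) := by
      show (ν ψ).real K ≤ _
      rw [← integral_indicator_one hK.measurableSet]
      refine integral_mono ?_ ((g.integrable (ν ψ)).re) ?_
      · exact (integrable_indicator_iff hK.measurableSet).mpr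
          ((integrable_const (1:ℝ)).integrableOn)
      · intro x
        by_cases hx : x ∈ K
        · have h1x : χ x = 1 := hχ1 hx
          simp [Set.indicator_of_mem hx, hgx, h1x]
        · simp only [Set.indicator_of_notMem hx, hgx, Complex.ofReal_re]
          exact (hχ01 x).1
    have h2 : ∫ x, (g x).re ∂(ν ψ) = (T g).re := by
      rw [hint]
      exact integral_re (g.integrable (ν ψ))
    have h3 : (T g).re ≤ ‖ψ‖^2 := by
      rw [← hTone_re]
      refine hTmono g (const Ω 1) fun x => ?_
      refine ⟨by rw [hgx]; exact Complex.ofReal_im _, by simp, ?_⟩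
      simp only [hgx, Complex.ofReal_re, const_apply, Complex.one_re]
      exact (hχ01 x).2
    linarith
  have hνle : ((ν ψ) Set.univ).toReal ≤ ‖ψ‖^2 := by
    by_contra hlt
    push_neg at hlt
    set ε : ℝ := ((ν ψ) Set.univ).toReal - ‖ψ‖^2 with hεdef
    have hε : 0 < ε := by rw [hεdef]; linarith
    obtain ⟨K, -, hK, hKlt⟩ := MeasurableSet.univ.exists_isCompact_lt_add
      (μ := ν ψ) (measure_ne_top _ _) (ε := ENNReal.ofReal ε)
      (ENNReal.ofReal_pos.mpr hε).ne'
    have h1 := hKbound K hK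
    have h2 : ((ν ψ) Set.univ).toReal < ((ν ψ) K).toReal + ε := by
      have hfin : (ν ψ) K + ENNReal.ofReal ε ≠ ⊤ :=
        ENNReal.add_ne_top.mpr ⟨measure_ne_top _ _, ENNReal.ofReal_ne_top⟩
      have := (ENNReal.toReal_lt_toReal (measure_ne_top _ _) hfin).mpr hKlt
      rwa [ENNReal.toReal_add (measure_ne_top _ _) ENNReal.ofReal_ne_top,
        ENNReal.toReal_ofReal hε.le] at this
    rw [hεdef] at h2
    linarith
  have hnorm_real : ∀ z : ℂ, z.im = 0 → ‖z‖ = |z.re| := by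
    intro z hz
    have hzz : z = ((z.re : ℝ) : ℂ) := Complex.ext rfl (by simp [hz])
    rw [hzz, Complex.norm_real, Real.norm_eq_abs, Complex.ofReal_re]
  -- the localization bound for real parts
  have habs : ∀ w h : Ω →ᵇ ℂ, (∀ x, (w x).im = 0 ∧ |(w x).re| ≤ ‖f‖) →
      (∀ x, (h x).im = 0 ∧ 0 ≤ (h x).re) →
      (T (w * h)).im = 0 ∧ |(T (w * h)).re| ≤ ‖f‖ * (T h).re := by
    intro w h hw hh
    have hwh : ∀ x, (w * h) x = w x * h x := fun x => rfl
    have hwhim : ∀ x, ((w * h) x).im = 0 := by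
      intro x
      rw [hwh, Complex.mul_im, (hw x).1, (hh x).1]
      ring
    have hwhre : ∀ x, ((w * h) x).re = (w x).re * (h x).re := by
      intro x
      rw [hwh, Complex.mul_re, (hw x).1, (hh x).1]
      ring
    have hCh : ∀ x, (((‖f‖ : ℂ) • h) x).re = ‖f‖ * (h x).re ∧ (((‖f‖ : ℂ) • h) x).im = 0 := by
      intro x
      have e : ((‖f‖ : ℂ) • h) x = (‖f‖ : ℂ) * h x := rfl
      rw [e, Complex.mul_re, Complex.mul_im, Complex.ofReal_re, Complex.ofReal_im, (hh x).1]
      constructor <;> ring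
    have hTCh : (T ((‖f‖ : ℂ) • h)).re = ‖f‖ * (T h).re := by
      rw [hTsmul, Complex.re_ofReal_mul]
    have hupper : (T (w * h)).re ≤ ‖f‖ * (T h).re := by
      rw [← hTCh]
      refine hTmono _ _ fun x => ⟨hwhim x, (hCh x).2, ?_⟩
      rw [hwhre, (hCh x).1]
      exact mul_le_mul_of_nonneg_right ((abs_le.mp (hw x).2).2) (hh x).2
    have hlower : -(‖f‖ * (T h).re) ≤ (T (w * h)).re := by
      have hTCh' : (T ((-(‖f‖ : ℂ)) • h)).re = -(‖f‖ * (T h).re) := by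
        rw [hTsmul]
        have e : (-(‖f‖ : ℂ)) * T h = -((‖f‖ : ℂ) * T h) := by ring
        rw [e, Complex.neg_re, Complex.re_ofReal_mul]
      rw [← hTCh']
      refine hTmono _ _ fun x => ⟨?_, hwhim x, ?_⟩
      · have e : ((-(‖f‖ : ℂ)) • h) x = (-(‖f‖ : ℂ)) * h x := rfl
        rw [e, Complex.mul_im]
        simp [(hh x).1]
      · have e : ((-(‖f‖ : ℂ)) • h) x = (-(‖f‖ : ℂ)) * h x := rfl
        rw [e, Complex.mul_re, hwhre]
        simp only [Complex.neg_re, Complex.neg_im, Complex.ofReal_re, Complex.ofReal_im, (hh x).1]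
        have := (abs_le.mp (hw x).2).1
        nlinarith [(hh x).2]
    refine ⟨?_, abs_le.mpr ⟨hlower, hupper⟩⟩
    -- imaginary part vanishes
    have h1 : ∀ x, ((w * h + (‖f‖ : ℂ) • h) x).im = 0 ∧ 0 ≤ ((w * h + (‖f‖ : ℂ) • h) x).re := by
      intro x
      have e : (w * h + (‖f‖ : ℂ) • h) x = (w * h) x + ((‖f‖ : ℂ) • h) x := rfl
      rw [e, Complex.add_im, Complex.add_re, hwhim, (hCh x).2, hwhre, (hCh x).1]
      refine ⟨by ring, ?_⟩
      have := (abs_le.mp (hw x).2).1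
      nlinarith [(hh x).2]
    have h2 : ∀ x, (((‖f‖ : ℂ) • h) x).im = 0 ∧ 0 ≤ (((‖f‖ : ℂ) • h) x).re := by
      intro x
      refine ⟨(hCh x).2, ?_⟩
      rw [(hCh x).1]
      exact mul_nonneg (norm_nonneg f) (hh x).2
    have e : T (w * h) = T (w * h + (‖f‖ : ℂ) • h) - T ((‖f‖ : ℂ) • h) := by
      rw [hTadd]; ring
    rw [e, Complex.sub_im, (hTpos _ h1).1, (hTpos _ h2).1]
    ring
  -- the key bound
  have key : ∀ h : Ω →ᵇ ℂ, (∀ x, (h x).im = 0 ∧ 0 ≤ (h x).re) →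
      ‖T (f * h)‖ ≤ 2 * (‖f‖ * (T h).re) := by
    intro h hh
    set u : Ω →ᵇ ℂ := (2⁻¹ : ℂ) • (f + star f) with hu
    set v : Ω →ᵇ ℂ := (2⁻¹ : ℂ) • (Complex.I • (star f - f)) with hv
    have hux : ∀ x, u x = (((f x).re : ℝ) : ℂ) := by
      intro x
      have e : u x = 2⁻¹ * (f x + (starRingEnd ℂ) (f x)) := rfl
      rw [e, Complex.add_conj]
      push_cast
      ring
    have hvx : ∀ x, v x = (((f x).im : ℝ) : ℂ) := by
      intro x
      have e : v x = 2⁻¹ * (Complex.I * ((starRingEnd ℂ) (f x) - f x)) := rfl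
      rw [e]
      have hs : (starRingEnd ℂ) (f x) - f x = -(((2 * (f x).im : ℝ) : ℂ) * Complex.I) := by
        rw [← Complex.sub_conj]
        ring
      rw [hs]
      have hI : Complex.I * Complex.I = -1 := Complex.I_mul_I
      push_cast
      linear_combination (-(f x).im : ℂ) * hI
    have hf : f = u + Complex.I • v := by
      ext x
      have e : (u + Complex.I • v) x = u x + Complex.I * v x := rfl
      rw [e, hux, hvx, mul_comm, Complex.re_add_im]
    have hsplit : T (f * h) = T (u * h) + Complex.I * T (v * h) := by
      have e : f * h = u * h + Complex.I • (v * h) := by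
        ext x
        have e1 : (u * h + Complex.I • (v * h)) x = u x * h x + Complex.I * (v x * h x) := rfl
        have e2 : (f * h) x = f x * h x := rfl
        rw [e1, e2, hux, hvx]
        conv_lhs => rw [show f x = (((f x).re : ℝ) : ℂ) + Complex.I * (((f x).im : ℝ) : ℂ) from by
          rw [mul_comm, Complex.re_add_im]]
        ring
      rw [e, hTadd, hTsmul]
    have hu' : ∀ x, (u x).im = 0 ∧ |(u x).re| ≤ ‖f‖ := by
      intro x
      rw [hux]
      refine ⟨Complex.ofReal_im _, ?_⟩
      rw [Complex.ofReal_re]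
      exact (Complex.abs_re_le_norm _).trans (f.norm_coe_le_norm x)
    have hv' : ∀ x, (v x).im = 0 ∧ |(v x).re| ≤ ‖f‖ := by
      intro x
      rw [hvx]
      refine ⟨Complex.ofReal_im _, ?_⟩
      rw [Complex.ofReal_re]
      exact (Complex.abs_im_le_norm _).trans (f.norm_coe_le_norm x)
    obtain ⟨hui, hub⟩ := habs u h hu' hh
    obtain ⟨hvi, hvb⟩ := habs v h hv' hh
    calc ‖T (f * h)‖ = ‖T (u * h) + Complex.I * T (v * h)‖ := by rw [hsplit]
      _ ≤ ‖T (u * h)‖ + ‖Complex.I * T (v * h)‖ := norm_add_le _ _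
      _ = |(T (u * h)).re| + |(T (v * h)).re| := by
          rw [norm_mul, Complex.norm_I, one_mul, hnorm_real _ hui, hnorm_real _ hvi]
      _ ≤ ‖f‖ * (T h).re + ‖f‖ * (T h).re := add_le_add hub hvb
      _ = 2 * (‖f‖ * (T h).re) := by ring
  -- main estimate
  have main : ∀ ε : ℝ, 0 < ε → ‖T f - ∫ x, f x ∂(ν ψ)‖ ≤ (3 * ‖f‖) * ε := by
    intro ε hε
    obtain ⟨g, hg, hglt⟩ := happrox ε hε
    obtain ⟨hgc, hgpt⟩ := hg
    have hfg : HasCompactSupport ⇑(f * g) := by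
      rw [coe_mul]; exact hgc.mul_left
    have hrepfg : T (f * g) = ∫ x, (f * g) x ∂(ν ψ) := hrep ψ _ hfg
    have hrepg : T g = ∫ x, g x ∂(ν ψ) := hrep ψ g hgc
    set h : Ω →ᵇ ℂ := const Ω 1 - g with hhdef
    have hhx : ∀ x, h x = 1 - g x := fun x => rfl
    have hhpt : ∀ x, (h x).im = 0 ∧ 0 ≤ (h x).re := by
      intro x
      rw [hhx, Complex.sub_im, Complex.sub_re, Complex.one_im, Complex.one_re, (hgpt x).1]
      exact ⟨by ring, by linarith [(hgpt x).2.2]⟩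
    have hTh : (T h).re = ‖ψ‖^2 - (T g).re := by
      have e : T (const Ω 1) = T h + T g := by rw [← hTadd, hhdef, sub_add_cancel]
      have e2 := congrArg Complex.re e
      rw [hTone_re, Complex.add_re] at e2
      linarith
    have hThε : (T h).re < ε := by rw [hTh]; linarith
    have hThnn : 0 ≤ (T h).re := (hTpos h hhpt).2
    have hA : ‖T f - T (f * g)‖ ≤ 2 * (‖f‖ * (T h).re) := by
      have e : T f - T (f * g) = T (f * h) := by
        have e2 : f * h = f - f * g := by
          ext x
          show f x * (1 - g x) = f x - f x * g x
          ring
        have e3 : T f = T ((f - f * g) + f * g) := by rw [sub_add_cancel]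
        rw [e2, e3, hTadd]
        ring
      rw [e]
      exact key h hhpt
    have hgre : ∫ x, (g x).re ∂(ν ψ) = (T g).re := by
      rw [hrepg]; exact integral_re (g.integrable (ν ψ))
    have hB : ‖(∫ x, (f * g) x ∂(ν ψ)) - ∫ x, f x ∂(ν ψ)‖ ≤ ‖f‖ * ε := by
      rw [← integral_sub ((f * g).integrable (ν ψ)) (f.integrable (ν ψ))]
      have step1 : ‖∫ x, ((f * g) x - f x) ∂(ν ψ)‖ ≤ ∫ x, ‖(f * g) x - f x‖ ∂(ν ψ) :=
        norm_integral_le_integral_norm _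
      have step2 : ∫ x, ‖(f * g) x - f x‖ ∂(ν ψ) ≤ ∫ x, ‖f‖ * (h x).re ∂(ν ψ) := by
        have hhint : Integrable (fun x => (h x).re) (ν ψ) := (h.integrable (ν ψ)).re
        refine integral_mono (((f * g).integrable (ν ψ)).sub (f.integrable (ν ψ))).norm
          (hhint.const_mul ‖f‖) ?_
        intro x
        show ‖(f * g) x - f x‖ ≤ ‖f‖ * (h x).re
        have e1 : (f * g) x - f x = -(f x * h x) := by
          have e0 : (f * g) x = f x * g x := rfl
          rw [hhx, e0]; ring
        rw [e1, norm_neg, norm_mul]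
        have e2 : ‖h x‖ = (h x).re := by
          rw [hnorm_real _ (hhpt x).1, abs_of_nonneg (hhpt x).2]
        rw [e2]
        exact mul_le_mul_of_nonneg_right (f.norm_coe_le_norm x) (hhpt x).2
      have step3 : ∫ x, ‖f‖ * (h x).re ∂(ν ψ) = ‖f‖ * ∫ x, (h x).re ∂(ν ψ) :=
        integral_const_mul _ _
      have step4 : ∫ x, (h x).re ∂(ν ψ) ≤ ε := by
        have e1 : ∀ x, (h x).re = 1 - (g x).re := by
          intro x; rw [hhx, Complex.sub_re, Complex.one_re]
        have e2 : ∫ x, (h x).re ∂(ν ψ) = ((ν ψ) Set.univ).toReal - ∫ x, (g x).re ∂(ν ψ) := by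
          have hgint : Integrable (fun x => (g x).re) (ν ψ) := (g.integrable (ν ψ)).re
          simp_rw [e1]
          rw [integral_sub (integrable_const 1) hgint, integral_const]
          simp [smul_eq_mul]; rfl
        rw [e2, hgre]
        linarith
      calc ‖∫ x, ((f * g) x - f x) ∂(ν ψ)‖ ≤ ∫ x, ‖(f * g) x - f x‖ ∂(ν ψ) := step1
        _ ≤ ‖f‖ * ∫ x, (h x).re ∂(ν ψ) := by rw [← step3]; exact step2
        _ ≤ ‖f‖ * ε := mul_le_mul_of_nonneg_left step4 (norm_nonneg f)
    calc ‖T f - ∫ x, f x ∂(ν ψ)‖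
        ≤ ‖T f - T (f * g)‖ + ‖T (f * g) - ∫ x, f x ∂(ν ψ)‖ := by
          have := dist_triangle (T f) (T (f * g)) (∫ x, f x ∂(ν ψ))
          simpa [dist_eq_norm] using this
      _ = ‖T f - T (f * g)‖ + ‖(∫ x, (f * g) x ∂(ν ψ)) - ∫ x, f x ∂(ν ψ)‖ := by rw [hrepfg]
      _ ≤ 2 * (‖f‖ * (T h).re) + ‖f‖ * ε := add_le_add hA hB
      _ ≤ 2 * (‖f‖ * ε) + ‖f‖ * ε := by nlinarith [norm_nonneg f]
      _ = (3 * ‖f‖) * ε := by ring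
  have hfinal : ‖T f - ∫ x, f x ∂(ν ψ)‖ ≤ 0 := by
    refine le_of_forall_pos_le_add fun ε hε => ?_
    have h3 : (0:ℝ) < 3 * ‖f‖ + 1 := by positivity
    have hd : 0 ≤ ε / (3 * ‖f‖ + 1) := by positivity
    have e : (3 * ‖f‖ + 1) * (ε / (3 * ‖f‖ + 1)) = ε := by field_simp
    have := main (ε / (3 * ‖f‖ + 1)) (by positivity)
    calc ‖T f - ∫ x, f x ∂(ν ψ)‖ ≤ (3 * ‖f‖) * (ε / (3 * ‖f‖ + 1)) := this
      _ ≤ 0 + ε := by rw [zero_add]; nlinarith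
  have hsub : T f - ∫ x, f x ∂(ν ψ) = 0 :=
    norm_eq_zero.mp (le_antisymm hfinal (norm_nonneg _))
  exact sub_eq_zero.mp hsub
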